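/- Let p be a prime and G a finite potent p-group. Then for every k ≥ 1: if p = 2, γ_{k+1}(G) ≤ γ_k(G)^4, and if p ≥ 3, γ_{p-1+k}(G) ≤ γ_{k+1}(G)^p. -/

import Mathlib

/-- Commutator `[x, y] = x⁻¹ * y⁻¹ * x * y`. -/
def comm' {G : Type*} [Group G] (x y : G) : G := x⁻¹ * y⁻¹ * x * y

/-- `spow H n` is the subgroup `H^n` generated by all `n`-th powers of elements of `H`. -/
def spow {G : Type*} [Group G] (H : Subgroup G) (n : ℕ) : Subgroup G :=
  Subgroup.closure {x | ∃ h ∈ H, x = h ^ n}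

/-- A finite `p`-group `G` is potent if `γ_{p-1}(G) ≤ G^p` for odd `p`,
or `G' ≤ G^4` for `p = 2`.  (Here `γ_k(G)` is `(⊤ : Subgroup G).lowerCentralSeries (k-1)`.) -/
def IsPotent (p : ℕ) (G : Type*) [Group G] : Prop :=
  if p = 2 then (⊤ : Subgroup G).lowerCentralSeries 1 ≤ spow (⊤ : Subgroup G) 4
  else (⊤ : Subgroup G).lowerCentralSeries (p - 2) ≤ spow (⊤ : Subgroup G) p


open Subgroup
open scoped commutatorElement

section Helpers

lemma hockey (n e : ℕ) : ∑ k ∈ Finset.range n, k.choose e = n.choose (e+1) := by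
  induction n with
  | zero => simp
  | succ n ih =>
    rw [Finset.sum_range_succ, ih]
    have h := Nat.choose_succ_succ n e
    simp only [Nat.succ_eq_add_one] at h
    omega

variable {G : Type*} [Group G]

lemma lcs_succ' (n : ℕ) :
    (⊤ : Subgroup G).lowerCentralSeries (n + 1) = ⁅(⊤ : Subgroup G).lowerCentralSeries n, ⊤⁆ := rfl

lemma three_subgroups {H₁ H₂ H₃ K : Subgroup G} [K.Normal] (h1 : ⁅⁅H₂, H₃⁆, H₁⁆ ≤ K)
    (h2 : ⁅⁅H₃, H₁⁆, H₂⁆ ≤ K) : ⁅⁅H₁, H₂⁆, H₃⁆ ≤ K := by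
  let π := QuotientGroup.mk' K
  have hker : π.ker = K := QuotientGroup.ker_mk' K
  have key : ∀ {A B C : Subgroup G}, ⁅⁅A, B⁆, C⁆ ≤ K →
      ⁅⁅Subgroup.map π A, Subgroup.map π B⁆, Subgroup.map π C⁆ = ⊥ := by
    intro A B C h
    rw [← Subgroup.map_commutator, ← Subgroup.map_commutator, Subgroup.map_eq_bot_iff, hker]
    exact h
  have h3 := Subgroup.commutator_commutator_eq_bot_of_rotate (key h1) (key h2)
  rw [← Subgroup.map_commutator, ← Subgroup.map_commutator, Subgroup.map_eq_bot_iff, hker] at h3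
  exact h3

lemma lcs_comm (a : ℕ) : ∀ b, ⁅(⊤ : Subgroup G).lowerCentralSeries a, (⊤ : Subgroup G).lowerCentralSeries b⁆ ≤
    (⊤ : Subgroup G).lowerCentralSeries (a + b + 1) := by
  induction a with
  | zero =>
    intro b
    rw [Subgroup.lowerCentralSeries_zero, Subgroup.commutator_comm, ← lcs_succ']
    exact Subgroup.lowerCentralSeries_antitone ⊤ (by omega)
  | succ a ih =>
    intro b
    rw [lcs_succ']
    apply three_subgroups
    · rw [Subgroup.commutator_comm (⊤ : Subgroup G), ← lcs_succ', Subgroup.commutator_comm]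
      exact (ih (b+1)).trans (Subgroup.lowerCentralSeries_antitone ⊤ (by omega))
    · refine (Subgroup.commutator_mono ((Subgroup.commutator_comm _ _).le.trans (ih b)) le_rfl).trans ?_
      rw [← lcs_succ']
      exact Subgroup.lowerCentralSeries_antitone ⊤ (by omega)

lemma lcs_map_surj {G' : Type*} [Group G'] (f : G →* G') (hf : Function.Surjective f) (n : ℕ) :
    Subgroup.map f ((⊤ : Subgroup G).lowerCentralSeries n) = (⊤ : Subgroup G').lowerCentralSeries n := by
  induction n with
  | zero =>
    simpa [Subgroup.lowerCentralSeries_zero] using (Subgroup.map_top_of_surjective f hf)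
  | succ n ih =>
    rw [lcs_succ', lcs_succ', Subgroup.map_commutator, ih,
      Subgroup.map_top_of_surjective f hf]

end Helpers
section Poly

variable {H : Type*} [Group H]

/-- `gw H k` is `γ_k(H)`, with `γ_0 = γ_1 = H`. -/
def gw (H : Type*) [Group H] (k : ℕ) : Subgroup H := (⊤ : Subgroup H).lowerCentralSeries (k - 1)

lemma gw_antitone {j j' : ℕ} (h : j ≤ j') : gw H j' ≤ gw H j :=
  Subgroup.lowerCentralSeries_antitone ⊤ (Nat.sub_le_sub_right h 1)

lemma gw_comm_mem {a b : ℕ} {x y : H} (hx : x ∈ gw H a) (hy : y ∈ gw H b) :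
    (x⁻¹ * y⁻¹ * x * y) ∈ gw H (a + b) := by
  have h1 : ⁅x⁻¹, y⁻¹⁆ ∈ ⁅(⊤ : Subgroup H).lowerCentralSeries (a-1), (⊤ : Subgroup H).lowerCentralSeries (b-1)⁆ :=
    Subgroup.commutator_mem_commutator (inv_mem hx) (inv_mem hy)
  have h2 := lcs_comm (a-1) (b-1) h1
  have h3 : (⊤ : Subgroup H).lowerCentralSeries ((a-1)+(b-1)+1) ≤ gw H (a+b) :=
    Subgroup.lowerCentralSeries_antitone ⊤ (by omega)
  have h4 : ⁅x⁻¹, y⁻¹⁆ = x⁻¹ * y⁻¹ * x * y := by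
    simp [commutatorElement_def]
  rw [h4] at h2
  exact h3 h2

/-- pointwise commutator (in the convention `x⁻¹y⁻¹xy`) of two sequences -/
def Kf (g h : ℕ → H) : ℕ → H := fun n => (g n)⁻¹ * (h n)⁻¹ * g n * h n

/-- discrete derivative -/
def derivF (g : ℕ → H) : ℕ → H := fun n => (g n)⁻¹ * g (n + 1)

/-- polynomial sequences of "weight ≥ j", truncated at derivative order `i` -/
def Pt (j : ℕ) : (i : ℕ) → Set (ℕ → H)
  | 0 => {g | ∀ n, g n ∈ gw H j}
  | (i+1) => {g | (∀ n, g n ∈ gw H j) ∧ derivF g ∈ Pt (j+1) i}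

lemma Pt_values {j i : ℕ} {g : ℕ → H} (hg : g ∈ Pt j i) : ∀ n, g n ∈ gw H j := by
  cases i with
  | zero => exact hg
  | succ i => exact hg.1

lemma Pt_succ_iff {j i : ℕ} {g : ℕ → H} :
    g ∈ Pt j (i+1) ↔ (∀ n, g n ∈ gw H j) ∧ derivF g ∈ Pt (j+1) i := Iff.rfl

lemma Pt_anti_j {j j' i : ℕ} (h : j ≤ j') : (Pt j' i : Set (ℕ → H)) ⊆ Pt j i := by
  induction i generalizing j j' with
  | zero => intro g hg n; exact gw_antitone h (hg n)
  | succ i ih =>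
    intro g hg
    exact ⟨fun n => gw_antitone h (hg.1 n), ih (by omega) hg.2⟩

lemma Pt_mono_i {j i : ℕ} {g : ℕ → H} (hg : g ∈ Pt j (i+1)) : g ∈ Pt j i := by
  induction i generalizing j g with
  | zero => exact hg.1
  | succ i ih => exact ⟨hg.1, ih hg.2⟩

lemma derivF_one : derivF (1 : ℕ → H) = 1 := by
  funext n; simp [derivF]

lemma one_mem_Pt (j i : ℕ) : (1 : ℕ → H) ∈ Pt j i := by
  induction i generalizing j with
  | zero => intro n; exact one_mem _
  | succ i ih =>
    refine ⟨fun n => one_mem _, ?_⟩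
    rw [derivF_one]
    exact ih (j+1)

lemma derivF_mul (g h : ℕ → H) :
    derivF (g * h) = derivF g * Kf (derivF g) h * derivF h := by
  funext n
  simp only [derivF, Kf, Pi.mul_apply, Pi.inv_apply]
  group

lemma derivF_inv (g : ℕ → H) :
    derivF (g⁻¹) = (derivF g)⁻¹ * Kf ((derivF g)⁻¹) (g⁻¹) := by
  funext n
  simp only [derivF, Kf, Pi.mul_apply, Pi.inv_apply]
  group

lemma derivF_Kf (g h : ℕ → H) :
    derivF (Kf g h) =
      Kf g (derivF h) * Kf (Kf g (derivF h)) (derivF g * Kf g h) *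
      Kf (Kf g h) (derivF h * derivF g) * Kf (derivF g) (h * derivF h) := by
  funext n
  simp only [derivF, Kf, Pi.mul_apply, Pi.inv_apply]
  group

theorem Pt_closure : ∀ i : ℕ,
    (∀ a b : ℕ, ∀ g h : ℕ → H, g ∈ Pt a i → h ∈ Pt b i → (g * h) ∈ Pt (min a b) i) ∧
    (∀ a b : ℕ, ∀ g h : ℕ → H, g ∈ Pt a i → h ∈ Pt b i → Kf g h ∈ Pt (a + b) i) ∧
    (∀ a : ℕ, ∀ g : ℕ → H, g ∈ Pt a i → g⁻¹ ∈ Pt a i) := by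
  intro i
  induction i with
  | zero =>
    refine ⟨?_, ?_, ?_⟩
    · intro a b g h hg hh n
      exact mul_mem (gw_antitone (min_le_left a b) (hg n))
        (gw_antitone (min_le_right a b) (hh n))
    · intro a b g h hg hh n
      exact gw_comm_mem (hg n) (hh n)
    · intro a g hg n
      exact inv_mem (hg n)
  | succ i ih =>
    obtain ⟨ihP, ihC, ihI⟩ := ih
    have valmul : ∀ a b : ℕ, ∀ g h : ℕ → H, (∀ n, g n ∈ gw H a) → (∀ n, h n ∈ gw H b) →
        ∀ n, (g * h) n ∈ gw H (min a b) := fun a b g h hg hh n =>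
      mul_mem (gw_antitone (min_le_left a b) (hg n)) (gw_antitone (min_le_right a b) (hh n))
    refine ⟨?_, ?_, ?_⟩
    · -- product
      intro a b g h hg hh
      refine ⟨valmul a b g h (Pt_values hg) (Pt_values hh), ?_⟩
      rw [derivF_mul]
      have h1 : derivF g ∈ Pt (min a b + 1) i := Pt_anti_j (by omega) hg.2
      have h2 : Kf (derivF g) h ∈ Pt (min a b + 1) i :=
        Pt_anti_j (by omega) (ihC (a+1) b _ _ hg.2 (Pt_mono_i hh))
      have h3 : derivF h ∈ Pt (min a b + 1) i := Pt_anti_j (by omega) hh.2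
      have h12 := ihP _ _ _ _ h1 h2
      rw [min_self] at h12
      have h123 := ihP _ _ _ _ h12 h3
      rw [min_self] at h123
      exact h123
    · -- commutator
      intro a b g h hg hh
      refine ⟨fun n => gw_comm_mem (Pt_values hg n) (Pt_values hh n), ?_⟩
      rw [derivF_Kf]
      have hgi := Pt_mono_i hg
      have hhi := Pt_mono_i hh
      have hq : Kf g h ∈ Pt (a + b) i := ihC a b _ _ hgi hhi
      have hF1 : Kf g (derivF h) ∈ Pt (a + b + 1) i := by
        have := ihC a (b+1) _ _ hgi hh.2
        exact Pt_anti_j (by omega) this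
      have hF2 : Kf (Kf g (derivF h)) (derivF g * Kf g h) ∈ Pt (a + b + 1) i := by
        have hx : derivF g * Kf g h ∈ Pt (min (a+1) (a+b)) i := ihP _ _ _ _ hg.2 hq
        have := ihC (a+b+1) (min (a+1) (a+b)) _ _ hF1 hx
        exact Pt_anti_j (by omega) this
      have hF3 : Kf (Kf g h) (derivF h * derivF g) ∈ Pt (a + b + 1) i := by
        have hx : derivF h * derivF g ∈ Pt (min (b+1) (a+1)) i := ihP _ _ _ _ hh.2 hg.2
        have := ihC (a+b) (min (b+1) (a+1)) _ _ hq hx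
        exact Pt_anti_j (by omega) this
      have hF4 : Kf (derivF g) (h * derivF h) ∈ Pt (a + b + 1) i := by
        have hx : h * derivF h ∈ Pt (min b (b+1)) i := ihP _ _ _ _ hhi hh.2
        have := ihC (a+1) (min b (b+1)) _ _ hg.2 hx
        exact Pt_anti_j (by omega) this
      have h12 := ihP _ _ _ _ hF1 hF2
      rw [min_self] at h12
      have h123 := ihP _ _ _ _ h12 hF3
      rw [min_self] at h123
      have h1234 := ihP _ _ _ _ h123 hF4
      rw [min_self] at h1234
      exact h1234
    · -- inverse
      intro a g hg
      refine ⟨fun n => inv_mem (Pt_values hg n), ?_⟩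
      rw [derivF_inv]
      have h1 : (derivF g)⁻¹ ∈ Pt (a+1) i := ihI _ _ hg.2
      have h2 : Kf ((derivF g)⁻¹) (g⁻¹) ∈ Pt (a+1) i := by
        have := ihC (a+1) a _ _ h1 (ihI _ _ (Pt_mono_i hg))
        exact Pt_anti_j (by omega) this
      have h12 := ihP _ _ _ _ h1 h2
      rw [min_self] at h12
      exact h12

/-- full polynomial class -/
def PP (j : ℕ) : Set (ℕ → H) := {g | ∀ i, g ∈ Pt j i}

lemma PP_mul {a b : ℕ} {g h : ℕ → H} (hg : g ∈ PP a) (hh : h ∈ PP b) :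
    g * h ∈ PP (min a b) := fun i => (Pt_closure i).1 a b g h (hg i) (hh i)

lemma PP_mul' {a : ℕ} {g h : ℕ → H} (hg : g ∈ PP a) (hh : h ∈ PP a) :
    g * h ∈ PP a := by
  have := PP_mul hg hh
  rwa [min_self] at this

lemma PP_inv {a : ℕ} {g : ℕ → H} (hg : g ∈ PP a) : g⁻¹ ∈ PP a :=
  fun i => (Pt_closure i).2.2 a g (hg i)

lemma PP_values {a : ℕ} {g : ℕ → H} (hg : g ∈ PP a) : ∀ n, g n ∈ gw H a :=
  Pt_values (hg 0)

lemma PP_deriv_values {a : ℕ} {g : ℕ → H} (hg : g ∈ PP a) (i : ℕ) :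
    ∀ n, (derivF^[i] g) n ∈ gw H (a + i) := by
  induction i generalizing a g with
  | zero => simpa using PP_values hg
  | succ i ih =>
    have hd : derivF g ∈ PP (a+1) := fun k => (hg (k+1)).2
    have := ih hd
    intro n
    rw [Function.iterate_succ_apply]
    have h2 := this n
    have : a + 1 + i = a + (i+1) := by omega
    rwa [this] at h2

end Poly
section Atoms

variable {H : Type*} [Group H]

def atomF (u : H) (e : ℕ) : ℕ → H := fun n => u ^ (n.choose e)

lemma derivF_atomF_succ (u : H) (e : ℕ) : derivF (atomF u (e+1)) = atomF u e := by
  funext n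
  simp only [derivF, atomF, Nat.choose_succ_succ]
  rw [add_comm (n.choose e) (n.choose (e+1)), pow_add]
  group

lemma derivF_atomF_zero (u : H) : derivF (atomF u 0) = 1 := by
  funext n
  simp [derivF, atomF]

lemma atomF_mem_Pt : ∀ (i j e : ℕ) (u : H), u ∈ gw H (j + e) → atomF u e ∈ Pt j i := by
  intro i
  induction i with
  | zero =>
    intro j e u hu n
    exact gw_antitone (by omega) (pow_mem hu _)
  | succ i ih =>
    intro j e u hu
    refine ⟨fun n => gw_antitone (by omega) (pow_mem hu _), ?_⟩
    cases e with
    | zero =>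
      rw [derivF_atomF_zero]
      exact one_mem_Pt (j+1) i
    | succ e =>
      rw [derivF_atomF_succ]
      have hu' : u ∈ gw H (j + 1 + e) := by
        have heq : j + 1 + e = j + (e+1) := by omega
        rw [heq]; exact hu
      exact ih (j+1) e u hu'

lemma atomF_mem_PP {j e : ℕ} {u : H} (hu : u ∈ gw H (j + e)) : atomF u e ∈ PP j :=
  fun i => atomF_mem_Pt i j e u hu

end Atoms

section Newton

variable {A : Type*} [CommGroup A]

lemma list_prod_map_mul {α : Type*} (L : List α) (f g : α → A) :
    (L.map (fun x => f x * g x)).prod = (L.map f).prod * (L.map g).prod := by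
  induction L with
  | nil => simp
  | cons a L ih =>
    simp only [List.map_cons, List.prod_cons, ih]
    rw [mul_assoc, mul_assoc, ← mul_assoc (g a), mul_comm (g a), mul_assoc]

theorem newton (D : ℕ) : ∀ (f : ℕ → A), (∀ n, (derivF)^[D] f n = 1) →
    ∀ n, f n = ((List.range D).map (fun e => ((derivF)^[e] f 0) ^ (n.choose e))).prod := by
  induction D with
  | zero =>
    intro f h n
    simpa using h n
  | succ D ih =>
    intro f h
    have key := ih (derivF f) (fun n => by
      rw [← Function.iterate_succ_apply]
      exact h n)
    intro n
    induction n with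
    | zero =>
      rw [List.range_succ_eq_map]
      simp only [List.map_cons, List.map_map, List.prod_cons, Function.comp_def,
        Function.iterate_zero_apply, Nat.choose_zero_right, pow_one, Nat.choose_zero_succ,
        pow_zero]
      simp
    | succ n ihn =>
      have hstep : f (n+1) = f n * derivF f n := by
        simp [derivF]
      rw [hstep, ihn, key n, List.range_succ_eq_map]
      simp only [List.map_cons, List.map_map, List.prod_cons, Function.comp_def,
        Function.iterate_zero_apply, Nat.choose_zero_right, pow_one,
        ← Function.iterate_succ_apply]
      rw [mul_assoc]
      congr 1
      have hsplit : (List.map (fun e => derivF^[e+1] f 0 ^ (n+1).choose (e+1)) (List.range D)).prod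
          = (List.map (fun e => derivF^[e+1] f 0 ^ n.choose (e+1)) (List.range D)).prod *
            (List.map (fun e => derivF^[e+1] f 0 ^ n.choose e) (List.range D)).prod := by
        have hfun : (fun e => derivF^[e+1] f 0 ^ (n+1).choose (e+1))
            = (fun e => derivF^[e+1] f 0 ^ n.choose (e+1) * derivF^[e+1] f 0 ^ n.choose e) := by
          funext e
          rw [← pow_add]
          congr 1
          have hcc := Nat.choose_succ_succ n e
          simp only [Nat.succ_eq_add_one] at hcc ⊢
          omega
        rw [hfun, list_prod_map_mul]
      rw [hsplit]

end Newton
section Taylor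

variable {H : Type*} [Group H]
open scoped IsMulCommutative

lemma Pt_map {H' : Type*} [Group H'] (f : H →* H') :
    ∀ (i j : ℕ) (g : ℕ → H), g ∈ Pt j i → (fun n => f (g n)) ∈ Pt j i := by
  intro i
  induction i with
  | zero =>
    intro j g hg n
    exact Subgroup.lowerCentralSeries.map f _ ⟨g n, hg n, rfl⟩
  | succ i ih =>
    intro j g hg
    refine ⟨fun n => Subgroup.lowerCentralSeries.map f _ ⟨g n, hg.1 n, rfl⟩, ?_⟩
    have hd : derivF (fun n => f (g n)) = fun n => f (derivF g n) := by
      funext n; simp [derivF]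
    rw [hd]
    exact ih (j+1) _ hg.2

lemma PP_map {H' : Type*} [Group H'] (f : H →* H') {j : ℕ} {g : ℕ → H} (hg : g ∈ PP j) :
    (fun n => f (g n)) ∈ PP j := fun i => Pt_map f i j g (hg i)

lemma prodFn_mem_PP (v : ℕ → H) (hv : ∀ e, v e ∈ gw H e) (L : List ℕ) :
    (fun n => (L.map (fun e => v e ^ n.choose e)).prod) ∈ PP 0 := by
  induction L with
  | nil =>
    have h0 : (fun (n : ℕ) => (List.map (fun e => v e ^ n.choose e) ([] : List ℕ)).prod)
        = (1 : ℕ → H) := by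
      funext n; simp
    rw [h0]
    exact fun i => one_mem_Pt 0 i
  | cons e L ih =>
    have heq : (fun n => (List.map (fun e' => v e' ^ n.choose e') (e :: L)).prod)
        = atomF (v e) e * (fun n => (L.map (fun e' => v e' ^ n.choose e')).prod) := by
      funext n; simp [atomF]
    rw [heq]
    exact PP_mul' (atomF_mem_PP (by simpa using hv e)) ih

lemma derivF_coe (K : Subgroup H) :
    ∀ (i : ℕ) (F : ℕ → K) (n : ℕ), ((derivF^[i] F) n : H) = derivF^[i] (fun m => (F m : H)) n := by
  intro i
  induction i with
  | zero => intro F n; rfl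
  | succ i ih =>
    intro F n
    rw [Function.iterate_succ_apply, Function.iterate_succ_apply]
    have hstep : (fun m => ((derivF F) m : H)) = derivF (fun m => (F m : H)) := by
      funext m; simp [derivF]
    rw [ih (derivF F) n, hstep]

lemma central_merge (x z : ℕ → H) (B : ℕ → ℕ) (hz : ∀ e, z e ∈ Subgroup.center H) :
    ∀ L : List ℕ, ((L.map (fun e => (x e * z e) ^ B e)).prod)
      = (L.map (fun e => x e ^ B e)).prod * (L.map (fun e => z e ^ B e)).prod := by
  intro L
  induction L with
  | nil => simp
  | cons e L ih =>
    simp only [List.map_cons, List.prod_cons, ih]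
    have hcomm : Commute (x e) (z e) := Subgroup.mem_center_iff.mp (hz e) (x e)
    rw [hcomm.mul_pow]
    have hzc : (z e) ^ (B e) ∈ Subgroup.center H := pow_mem (hz e) _
    have hmv : (z e) ^ (B e) * (L.map (fun e => x e ^ B e)).prod
        = (L.map (fun e => x e ^ B e)).prod * (z e) ^ (B e) :=
      (Subgroup.mem_center_iff.mp hzc _).symm
    rw [mul_assoc, mul_assoc, ← mul_assoc ((z e) ^ (B e)), hmv, mul_assoc]

theorem taylor : ∀ (C : ℕ) (H' : Type*) [Group H'],
    (⊤ : Subgroup H').lowerCentralSeries C = ⊥ →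
    ∀ g : ℕ → H', g ∈ PP 0 → g 0 = 1 →
    ∃ u : ℕ → H', (∀ e, u e ∈ gw H' e) ∧
      ∀ n, g n = ((List.range C).map (fun e => (u (e+1)) ^ (n.choose (e+1)))).prod := by
  intro C
  induction C with
  | zero =>
    intro H' _ hnil g hg hg0
    refine ⟨fun _ => 1, fun e => one_mem _, fun n => ?_⟩
    have h1 : g n ∈ (⊤ : Subgroup H').lowerCentralSeries 0 := Subgroup.mem_top _
    rw [hnil] at h1
    simpa using h1
  | succ C ih =>
    intro H' _ hnil g hg hg0
    set A := (⊤ : Subgroup H').lowerCentralSeries C with hA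
    have hAcent : ∀ x ∈ A, x ∈ Subgroup.center H' := by
      intro x hx
      rw [Subgroup.mem_center_iff]
      intro y
      have h1 : ⁅x, y⁆ ∈ (⊤ : Subgroup H').lowerCentralSeries (C+1) := by
        rw [lcs_succ']
        exact Subgroup.commutator_mem_commutator hx (Subgroup.mem_top y)
      rw [hnil] at h1
      have h2 : ⁅x, y⁆ = 1 := h1
      exact (commutatorElement_eq_one_iff_mul_comm.mp h2).symm
    let π := QuotientGroup.mk' A
    have hsurj : Function.Surjective π := QuotientGroup.mk'_surjective A
    have hnilQ : (⊤ : Subgroup (H' ⧸ A)).lowerCentralSeries C = ⊥ := by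
      rw [← lcs_map_surj π hsurj C, Subgroup.map_eq_bot_iff, QuotientGroup.ker_mk']
    obtain ⟨uQ, huQ, hform⟩ := ih (H' ⧸ A) hnilQ (fun n => π (g n)) (PP_map π hg)
      (by simp [hg0])
    have hlift : ∀ e, ∃ v : H', v ∈ gw H' e ∧ π v = uQ e := by
      intro e
      have h1 : uQ e ∈ gw (H' ⧸ A) e := huQ e
      have h2 : gw (H' ⧸ A) e = Subgroup.map π (gw H' e) := (lcs_map_surj π hsurj (e-1)).symm
      rw [h2] at h1
      obtain ⟨v, hv1, hv2⟩ := h1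
      exact ⟨v, hv1, hv2⟩
    choose u' hu'mem hu'eq using hlift
    set Qfn : ℕ → H' := fun n => ((List.range C).map (fun e => (u' (e+1)) ^ (n.choose (e+1)))).prod
      with hQfndef
    have hQfnPP : Qfn ∈ PP 0 := by
      have h1 := prodFn_mem_PP u' hu'mem ((List.range C).map (· + 1))
      have h2 : (fun n => (((List.range C).map (· + 1)).map (fun e => u' e ^ n.choose e)).prod)
          = Qfn := by
        funext n
        rw [List.map_map]
        rfl
      rwa [h2] at h1
    set δ : ℕ → H' := fun n => (Qfn n)⁻¹ * g n with hδdef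
    have hδPP : δ ∈ PP 0 := by
      have hd : δ = Qfn⁻¹ * g := rfl
      rw [hd]
      exact PP_mul' (PP_inv hQfnPP) hg
    have hδA : ∀ n, δ n ∈ A := by
      intro n
      have hQg : π (Qfn n) = π (g n) := by
        have hfe : (π ∘ fun e => u' (e+1) ^ n.choose (e+1))
            = (fun e => uQ (e+1) ^ n.choose (e+1)) := by
          funext e
          simp only [Function.comp_apply, map_pow, hu'eq]
        simp only [hQfndef]
        rw [map_list_prod, List.map_map, hfe, hform n]
      have hπ : π (δ n) = 1 := by
        have h3 : π (δ n) = (π (Qfn n))⁻¹ * π (g n) := by simp [hδdef]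
        rw [h3, hQg, inv_mul_cancel]
      have h4 : δ n ∈ π.ker := hπ
      rwa [QuotientGroup.ker_mk'] at h4
    have hδZ : ∀ n, δ n ∈ Subgroup.center H' := fun n => hAcent _ (hδA n)
    set δ' : ℕ → ↥(Subgroup.center H') := fun n => ⟨δ n, hδZ n⟩ with hδ'def
    have hδ'coe : ∀ (i n : ℕ), ((derivF^[i] δ') n : H') = derivF^[i] δ n := by
      intro i n
      rw [derivF_coe]
    have hvan : ∀ n, (derivF^[C+2] δ') n = 1 := by
      intro n
      have h1 : derivF^[C+2] δ n ∈ gw H' (0 + (C+2)) := PP_deriv_values hδPP (C+2) n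
      have h2 : gw H' (0 + (C+2)) = (⊤ : Subgroup H').lowerCentralSeries (C+1) := by
        have h3 : (0 + (C+2)) - 1 = C + 1 := by omega
        rw [gw, h3]
      rw [h2, hnil] at h1
      apply Subtype.ext
      rw [hδ'coe]
      simpa using h1
    have hNewt := newton (C+2) δ' hvan
    set a : ℕ → H' := fun e => derivF^[e] δ 0 with hadef
    have haZ : ∀ e, a e ∈ Subgroup.center H' := by
      intro e
      have h1 : a e = ((derivF^[e] δ') 0 : H') := (hδ'coe e 0).symm
      rw [h1]
      exact SetLike.coe_mem _
    have hagw : ∀ e, a e ∈ gw H' e := by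
      intro e
      have h1 := PP_deriv_values hδPP e 0
      simpa using h1
    have hδlist : ∀ n, δ n = ((List.range (C+2)).map (fun e => a e ^ n.choose e)).prod := by
      intro n
      have h1 := congrArg (Subgroup.center H').subtype (hNewt n)
      rw [map_list_prod, List.map_map] at h1
      have hfeq : ((Subgroup.center H').subtype ∘ (fun e => (derivF^[e] δ' 0) ^ n.choose e))
          = (fun e => a e ^ n.choose e) := by
        funext e
        simp only [Function.comp_apply, map_pow]
        congr 1
        exact hδ'coe e 0
      rw [hfeq] at h1
      exact h1
    have ha0 : a 0 = 1 := by
      have hQ0 : Qfn 0 = 1 := by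
        rw [hQfndef]
        apply List.prod_eq_one
        intro x hx
        simp only [List.mem_map] at hx
        obtain ⟨e, _, rfl⟩ := hx
        simp
      have : a 0 = δ 0 := rfl
      rw [this, hδdef]
      simp [hQ0, hg0]
    set w : ℕ → H' := fun e => if e = C+1 then 1 else u' e with hwdef
    refine ⟨fun e => w e * a e, ?_, ?_⟩
    · intro e
      refine mul_mem ?_ (hagw e)
      rw [hwdef]
      dsimp only
      split
      · exact one_mem _
      · exact hu'mem e
    · intro n
      have hgQδ : g n = Qfn n * δ n := by
        rw [hδdef]
        simp
      have hδtail : δ n = ((List.range (C+1)).map (fun e => a (e+1) ^ n.choose (e+1))).prod := by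
        rw [hδlist n, List.range_succ_eq_map]
        simp only [List.map_cons, List.prod_cons, List.map_map, Nat.choose_zero_right, pow_one,
          ha0, one_mul]
        rfl
      have hQext : Qfn n = ((List.range (C+1)).map (fun e => w (e+1) ^ n.choose (e+1))).prod := by
        rw [List.range_succ, List.map_append, List.prod_append]
        simp only [List.map_cons, List.map_nil, List.prod_cons, List.prod_nil]
        have hwC : w (C+1) = 1 := by rw [hwdef]; simp
        rw [hwC, one_pow, mul_one, mul_one]
        simp only [hQfndef]
        congr 1
        apply List.map_congr_left
        intro e he
        have he' : e < C := List.mem_range.mp he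
        rw [hwdef]
        dsimp only
        rw [if_neg (by omega)]
      rw [hgQδ, hδtail, hQext]
      have hmm : ∀ (F : ℕ → H'),
          (List.range (C+1)).map (fun e => F (e+1)) = ((List.range (C+1)).map (· + 1)).map F := by
        intro F
        rw [List.map_map]
        rfl
      rw [hmm (fun e => w e ^ n.choose e), hmm (fun e => a e ^ n.choose e),
        hmm (fun e => (w e * a e) ^ n.choose e)]
      exact (central_merge w a (fun e => n.choose e) haZ _).symm

end Taylor
section Core

theorem core_regular {H : Type*} [Group H] (p : ℕ) (hp : p.Prime)
    (hnil : (⊤ : Subgroup H).lowerCentralSeries (p-1) = ⊥)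
    (hexp : ∀ u ∈ (⊤ : Subgroup H).lowerCentralSeries 1, u ^ p = 1)
    (a b : H) : (a*b)^p = a^p * b^p := by
  have hple : 2 ≤ p := hp.two_le
  set g : ℕ → H := (atomF (a*b) 1)⁻¹ * (atomF a 1 * atomF b 1) with hgdef
  have hmemtop : ∀ x : H, x ∈ gw H (0+1) := fun x => Subgroup.mem_top x
  have hgPP : g ∈ PP 0 :=
    PP_mul' (PP_inv (atomF_mem_PP (hmemtop _)))
      (PP_mul' (atomF_mem_PP (hmemtop _)) (atomF_mem_PP (hmemtop _)))
  have hg0 : g 0 = 1 := by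
    simp [hgdef, atomF]
  obtain ⟨u, humem, hform⟩ := taylor (p-1) H hnil g hgPP hg0
  have hu1 : u 1 = 1 := by
    obtain ⟨m, hm⟩ : ∃ m, p - 1 = m + 1 := ⟨p - 2, by omega⟩
    have h1 := hform 1
    have hg1 : g 1 = 1 := by
      simp only [hgdef, atomF, Pi.mul_apply, Pi.inv_apply, Nat.choose_one_right, pow_one]
      group
    rw [hg1, hm, List.range_succ_eq_map] at h1
    simp only [List.map_cons, List.prod_cons, List.map_map] at h1
    have htail : (List.map ((fun e => u (e+1) ^ Nat.choose 1 (e+1)) ∘ Nat.succ)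
        (List.range m)).prod = 1 := by
      apply List.prod_eq_one
      intro x hx
      simp only [List.mem_map, Function.comp_apply] at hx
      obtain ⟨e, _, rfl⟩ := hx
      have hz : Nat.choose 1 (Nat.succ e + 1) = 0 := Nat.choose_eq_zero_of_lt (by omega)
      rw [hz, pow_zero]
    rw [htail, mul_one] at h1
    simpa using h1.symm
  have hp1 := hform p
  have hgp : g p = ((a*b)^p)⁻¹ * (a^p * b^p) := by
    simp [hgdef, atomF, Nat.choose_one_right]
  have hrhs : ((List.range (p-1)).map (fun e => u (e+1) ^ (p.choose (e+1)))).prod = 1 := by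
    apply List.prod_eq_one
    intro x hx
    simp only [List.mem_map, List.mem_range] at hx
    obtain ⟨e, he, rfl⟩ := hx
    rcases Nat.eq_zero_or_pos e with he0 | hepos
    · subst he0
      rw [hu1, one_pow]
    · have hdvd : p ∣ p.choose (e+1) := hp.dvd_choose_self (by omega) (by omega)
      obtain ⟨m, hm⟩ := hdvd
      rw [hm, pow_mul]
      have humem2 : u (e+1) ∈ (⊤ : Subgroup H).lowerCentralSeries 1 := by
        have h3 := humem (e+1)
        have hge : gw H (e+1) ≤ gw H 2 := gw_antitone (by omega)
        exact hge h3
      rw [hexp _ humem2, one_pow]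
  rw [hgp, hrhs] at hp1
  exact inv_mul_eq_one.mp hp1

end Core
section Plumbing

variable {G : Type*} [Group G]

lemma pow_mem_spow {H : Subgroup G} {h : G} (hh : h ∈ H) (n : ℕ) : h ^ n ∈ spow H n :=
  Subgroup.subset_closure ⟨h, hh, rfl⟩

lemma spow_mono {H K : Subgroup G} (h : H ≤ K) (n : ℕ) : spow H n ≤ spow K n :=
  Subgroup.closure_mono (fun _ ⟨h', hh', he⟩ => ⟨h', h hh', he⟩)

lemma spow_normal (H : Subgroup G) [hn : H.Normal] (n : ℕ) : (spow H n).Normal := by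
  constructor
  intro x hx g
  induction hx using Subgroup.closure_induction with
  | mem y hy =>
    obtain ⟨h, hh, rfl⟩ := hy
    refine Subgroup.subset_closure ⟨g * h * g⁻¹, hn.conj_mem h hh g, ?_⟩
    rw [conj_pow]
  | one => simpa using one_mem _
  | mul y z _ _ hy' hz' =>
    have : g * (y * z) * g⁻¹ = (g * y * g⁻¹) * (g * z * g⁻¹) := by group
    rw [this]; exact mul_mem hy' hz'
  | inv y _ hy' =>
    have : g * y⁻¹ * g⁻¹ = (g * y * g⁻¹)⁻¹ := by group
    rw [this]; exact inv_mem hy'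

lemma spow_map {G' : Type*} [Group G'] (f : G →* G') (H : Subgroup G) (n : ℕ) :
    Subgroup.map f (spow H n) = spow (Subgroup.map f H) n := by
  rw [spow, spow, MonoidHom.map_closure]
  congr 1
  ext x
  constructor
  · rintro ⟨y, ⟨h, hh, rfl⟩, rfl⟩
    exact ⟨f h, ⟨h, hh, rfl⟩, map_pow f h n⟩
  · rintro ⟨y, ⟨h, hh, rfl⟩, rfl⟩
    exact ⟨h ^ n, ⟨h, hh, rfl⟩, map_pow f h n⟩

lemma spow_bot_exp {H : Subgroup G} {n : ℕ} (h : spow H n = ⊥) : ∀ x ∈ H, x ^ n = 1 := by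
  intro x hx
  have h2 := pow_mem_spow hx n
  rw [h] at h2
  simpa using h2

def iterC (N : Subgroup G) : ℕ → Subgroup G
  | 0 => N
  | (k+1) => ⁅iterC N k, ⊤⁆

lemma iterC_normal (N : Subgroup G) [hn : N.Normal] (k : ℕ) : (iterC N k).Normal := by
  induction k with
  | zero => exact hn
  | succ k ih => exact @Subgroup.commutator_normal _ _ (iterC N k) ⊤ ih _

lemma iterC_map {G' : Type*} [Group G'] (f : G →* G') (hf : Function.Surjective f)
    (N : Subgroup G) (k : ℕ) :
    Subgroup.map f (iterC N k) = iterC (Subgroup.map f N) k := by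
  induction k with
  | zero => rfl
  | succ k ih =>
    show Subgroup.map f ⁅iterC N k, ⊤⁆ = ⁅iterC (Subgroup.map f N) k, ⊤⁆
    rw [Subgroup.map_commutator, ih, Subgroup.map_top_of_surjective f hf]

lemma iterC_lcs (j : ℕ) : ∀ k, iterC ((⊤ : Subgroup G).lowerCentralSeries j) k = (⊤ : Subgroup G).lowerCentralSeries (j + k) := by
  intro k
  induction k with
  | zero => rfl
  | succ k ih =>
    show ⁅iterC ((⊤ : Subgroup G).lowerCentralSeries j) k, ⊤⁆ = _
    rw [ih, ← lcs_succ']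
    rfl

lemma commutator_closure_le (S : Set G) (M : Subgroup G) [hM : M.Normal]
    (h : ∀ s ∈ S, ∀ t ∈ S, ⁅s, t⁆ ∈ M) : ⁅Subgroup.closure S, Subgroup.closure S⁆ ≤ M := by
  rw [Subgroup.commutator_le]
  have inner : ∀ s ∈ S, ∀ g2 ∈ Subgroup.closure S, ⁅s, g2⁆ ∈ M := by
    intro s hs g2 hg2
    induction hg2 using Subgroup.closure_induction with
    | mem t ht => exact h s hs t ht
    | one => simpa using one_mem M
    | mul a b _ _ ha' hb' =>
      have hid : ⁅s, a * b⁆ = ⁅s, a⁆ * (a * ⁅s, b⁆ * a⁻¹) := by group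
      rw [hid]
      exact mul_mem ha' (hM.conj_mem _ hb' a)
    | inv a _ ha' =>
      have hid : ⁅s, a⁻¹⁆ = a⁻¹ * ⁅s, a⁆⁻¹ * a⁻¹⁻¹ := by group
      rw [hid]
      exact hM.conj_mem _ (inv_mem ha') a⁻¹
  intro g1 hg1 g2 hg2
  induction hg1 using Subgroup.closure_induction with
  | mem s hs => exact inner s hs g2 hg2
  | one => simpa using one_mem M
  | mul a b _ _ ha' hb' =>
    have hid : ⁅a * b, g2⁆ = (a * ⁅b, g2⁆ * a⁻¹) * ⁅a, g2⁆ := by group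
    rw [hid]
    exact mul_mem (hM.conj_mem _ hb' a) ha'
  | inv a _ ha' =>
    have hid : ⁅a⁻¹, g2⁆ = a⁻¹ * ⁅a, g2⁆⁻¹ * a⁻¹⁻¹ := by group
    rw [hid]
    exact hM.conj_mem _ (inv_mem ha') a⁻¹

lemma map_subtype_top (H : Subgroup G) : Subgroup.map H.subtype ⊤ = H := by
  rw [← MonoidHom.range_eq_map, Subgroup.range_subtype]

lemma exists_central_order (p : ℕ) (hp : p.Prime) {G : Type*} [Group G] [Finite G]
    (hG : IsPGroup p G) [Nontrivial G] :
    ∃ z : G, z ∈ Subgroup.center G ∧ z ≠ 1 ∧ z ^ p = 1 := by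
  classical
  haveI : Fact p.Prime := ⟨hp⟩
  haveI := hG.center_nontrivial
  obtain ⟨zc, hne⟩ := exists_ne (1 : Subgroup.center G)
  obtain ⟨z₀, hz₀⟩ := zc
  have hz₀ne : z₀ ≠ 1 := by
    intro h
    apply hne
    apply Subtype.ext
    exact h
  have hex : ∃ k, z₀ ^ p ^ k = 1 := hG z₀
  have hk₀ : z₀ ^ p ^ (Nat.find hex) = 1 := Nat.find_spec hex
  have hk₀pos : Nat.find hex ≠ 0 := by
    intro h0
    rw [h0] at hk₀
    simp at hk₀
    exact hz₀ne hk₀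
  obtain ⟨k₁, hk₁⟩ : ∃ k₁, Nat.find hex = k₁ + 1 := ⟨Nat.find hex - 1, by omega⟩
  refine ⟨z₀ ^ p ^ k₁, pow_mem hz₀ _, ?_, ?_⟩
  · intro h
    exact Nat.find_min hex (by omega) h
  · rw [← pow_mul, ← pow_succ, ← hk₁]
    exact hk₀

end Plumbing
section EltStep

variable {G : Type*} [Group G]

lemma elt_step_odd (p : ℕ) (hp : p.Prime) (hp3 : 3 ≤ p)
    (N : Subgroup G) (hN : N.Normal)
    (hpo : iterC N (p-2) ≤ spow N p)
    (hexpc : ∀ u ∈ ⁅N, (⊤ : Subgroup G)⁆, u ^ p = 1)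
    (hKcent : ∀ x ∈ ⁅spow N p, (⊤ : Subgroup G)⁆, x ∈ Subgroup.center G)
    {c y : G} (hc : c ∈ ⁅N, (⊤ : Subgroup G)⁆) (hy : y ∈ N) :
    (c * y) ^ p = y ^ p := by
  haveI := hN
  set H₀ := Subgroup.closure ({c, y} : Set G) with hH₀
  have hsubN : H₀ ≤ N := by
    rw [hH₀, Subgroup.closure_le]
    intro x hx
    simp only [Set.mem_insert_iff, Set.mem_singleton_iff] at hx
    rcases hx with rfl | rfl
    · exact Subgroup.commutator_le_left N ⊤ hc
    · exact hy
  set U : ℕ → Subgroup G := fun j => ⁅iterC N (j+1), N⁆ with hU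
  haveI hUn : ∀ j, (U j).Normal := fun j =>
    @Subgroup.commutator_normal _ _ (iterC N (j+1)) N (iterC_normal N (j+1)) hN
  have hcN1 : c ∈ iterC N 1 := hc
  have claimA : ∀ j, Subgroup.map H₀.subtype ((⊤ : Subgroup ↥H₀).lowerCentralSeries (j+1)) ≤ U j := by
    intro j
    induction j with
    | zero =>
      have h1 : Subgroup.map H₀.subtype ((⊤ : Subgroup ↥H₀).lowerCentralSeries 1) = ⁅H₀, H₀⁆ := by
        rw [lcs_succ', Subgroup.map_commutator, Subgroup.lowerCentralSeries_zero, map_subtype_top]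
      rw [h1, hH₀]
      apply commutator_closure_le
      intro s hs t ht
      simp only [Set.mem_insert_iff, Set.mem_singleton_iff] at hs ht
      rcases hs with hs | hs <;> rcases ht with ht | ht <;> rw [hs, ht]
      · have hone : ⁅c, c⁆ = 1 := by group
        rw [hone]; exact one_mem _
      · exact Subgroup.commutator_mem_commutator hcN1 hy
      · have h2 := Subgroup.commutator_mem_commutator hy hcN1
        rwa [Subgroup.commutator_comm] at h2
      · have hone : ⁅y, y⁆ = 1 := by group
        rw [hone]; exact one_mem _
    | succ j ih =>
      have h1 : Subgroup.map H₀.subtype ((⊤ : Subgroup ↥H₀).lowerCentralSeries (j+2)) =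
          ⁅Subgroup.map H₀.subtype ((⊤ : Subgroup ↥H₀).lowerCentralSeries (j+1)), H₀⁆ := by
        rw [lcs_succ', Subgroup.map_commutator, map_subtype_top]
      rw [h1]
      refine (Subgroup.commutator_mono ih hsubN).trans ?_
      refine (Subgroup.commutator_mono (Subgroup.commutator_mono le_rfl le_top) le_rfl).trans ?_
      show ⁅⁅iterC N (j+1), ⊤⁆, N⁆ ≤ U (j+1)
      exact le_rfl
  have hA1 : Subgroup.map H₀.subtype ((⊤ : Subgroup ↥H₀).lowerCentralSeries (p-2)) ≤ ⁅spow N p, ⊤⁆ := by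
    have h2 := claimA (p-3)
    rw [show p - 3 + 1 = p - 2 by omega] at h2
    refine h2.trans ?_
    show ⁅iterC N (p-3+1), N⁆ ≤ _
    rw [show p - 3 + 1 = p - 2 by omega]
    exact Subgroup.commutator_mono hpo le_top
  have hcentral : ∀ x ∈ Subgroup.map H₀.subtype ((⊤ : Subgroup ↥H₀).lowerCentralSeries (p-2)),
      x ∈ Subgroup.center G := fun x hx => hKcent x (hA1 hx)
  have hnilH₀ : (⊤ : Subgroup ↥H₀).lowerCentralSeries (p-1) = ⊥ := by
    have h2 : Subgroup.map H₀.subtype ((⊤ : Subgroup ↥H₀).lowerCentralSeries (p-1)) = ⊥ := by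
      rw [show p - 1 = (p-2)+1 by omega, lcs_succ', Subgroup.map_commutator, map_subtype_top]
      rw [eq_bot_iff, Subgroup.commutator_le]
      intro g1 hg1 g2 _
      have hc1 := hcentral g1 hg1
      have h3 : ⁅g1, g2⁆ = 1 :=
        commutatorElement_eq_one_iff_mul_comm.mpr (Subgroup.mem_center_iff.mp hc1 g2).symm
      simp [h3]
    exact (Subgroup.map_eq_bot_iff_of_injective _ (Subgroup.subtype_injective H₀)).mp h2
  have hexpH₀ : ∀ u ∈ (⊤ : Subgroup ↥H₀).lowerCentralSeries 1, u ^ p = 1 := by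
    intro u hu
    have h4 : Subgroup.map H₀.subtype ((⊤ : Subgroup ↥H₀).lowerCentralSeries 1) ≤ ⁅N, (⊤ : Subgroup G)⁆ := by
      refine (claimA 0).trans ?_
      show ⁅iterC N 1, N⁆ ≤ ⁅N, ⊤⁆
      exact Subgroup.commutator_le_left (⁅N, ⊤⁆) N
    have h3 : (u : G) ∈ ⁅N, (⊤ : Subgroup G)⁆ := h4 ⟨u, hu, rfl⟩
    have h5 := hexpc _ h3
    apply Subtype.ext
    rw [SubgroupClass.coe_pow]
    exact h5
  have hcH₀ : c ∈ H₀ := Subgroup.subset_closure (by simp)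
  have hyH₀ : y ∈ H₀ := Subgroup.subset_closure (by simp)
  have hcore := core_regular p hp hnilH₀ hexpH₀ ⟨c, hcH₀⟩ ⟨y, hyH₀⟩
  have hcoe := congrArg H₀.subtype hcore
  simp only [map_mul, map_pow] at hcoe
  have hcoe2 : (c * y) ^ p = c ^ p * y ^ p := hcoe
  rw [hcoe2, hexpc c hc, one_mul]

end EltStep
section EltTwo

variable {G : Type*} [Group G]

lemma elt_step_two (N : Subgroup G) (hN : N.Normal)
    (hpo : ⁅N, (⊤ : Subgroup G)⁆ ≤ spow N 4)
    (hexpc : ∀ u ∈ ⁅N, (⊤ : Subgroup G)⁆, u ^ 4 = 1)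
    (hKZ : ∀ x ∈ ⁅spow N 4, (⊤ : Subgroup G)⁆, x ∈ Subgroup.center G ∧ x ^ 2 = 1)
    {c y : G} (hc : c ∈ ⁅N, (⊤ : Subgroup G)⁆) (hy : y ∈ N) :
    (c * y) ^ 4 = y ^ 4 := by
  have hc4 : c ∈ spow N 4 := hpo hc
  obtain ⟨hz1c, hz1sq⟩ := hKZ ⁅c, y⁆
    (Subgroup.commutator_mem_commutator hc4 (Subgroup.mem_top y))
  obtain ⟨hz2c, hz2sq⟩ := hKZ ⁅c, y^2⁆
    (Subgroup.commutator_mem_commutator hc4 (Subgroup.mem_top (y^2)))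
  have hyc : y * c = ⁅c, y⁆⁻¹ * (c * y) := by group
  have hmove1 : c * ⁅c, y⁆⁻¹ = ⁅c, y⁆⁻¹ * c :=
    Subgroup.mem_center_iff.mp (inv_mem hz1c) c
  have h2 : (c * y) ^ 2 = ⁅c, y⁆⁻¹ * (c^2 * y^2) := by
    calc (c * y) ^ 2 = c * (y * c) * y := by rw [pow_two]; group
    _ = c * (⁅c, y⁆⁻¹ * (c * y)) * y := by rw [hyc]
    _ = (c * ⁅c, y⁆⁻¹) * (c * y * y) := by group
    _ = (⁅c, y⁆⁻¹ * c) * (c * y * y) := by rw [hmove1]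
    _ = ⁅c, y⁆⁻¹ * (c^2 * y^2) := by rw [pow_two, pow_two]; group
  have hy2c : y^2 * c = ⁅c, y^2⁆⁻¹ * (c * y^2) := by group
  have hmove2 : c * ⁅c, y^2⁆⁻¹ = ⁅c, y^2⁆⁻¹ * c :=
    Subgroup.mem_center_iff.mp (inv_mem hz2c) c
  have h3 : y^2 * c^2 = c^2 * y^2 := by
    have h3a : y^2 * c^2 = (y^2 * c) * c := by rw [pow_two c, ← mul_assoc]
    rw [h3a, hy2c]
    calc ⁅c, y^2⁆⁻¹ * (c * y^2) * c = ⁅c, y^2⁆⁻¹ * c * (y^2 * c) := by group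
    _ = ⁅c, y^2⁆⁻¹ * c * (⁅c, y^2⁆⁻¹ * (c * y^2)) := by rw [hy2c]
    _ = ⁅c, y^2⁆⁻¹ * (c * ⁅c, y^2⁆⁻¹) * (c * y^2) := by group
    _ = ⁅c, y^2⁆⁻¹ * (⁅c, y^2⁆⁻¹ * c) * (c * y^2) := by rw [hmove2]
    _ = (⁅c, y^2⁆⁻¹ * ⁅c, y^2⁆⁻¹) * (c * c * y^2) := by group
    _ = (⁅c, y^2⁆ ^ 2)⁻¹ * (c^2 * y^2) := by rw [pow_two ⁅c, y^2⁆, pow_two c]; group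
    _ = c^2 * y^2 := by rw [hz2sq]; group
  have h4 : (c * y) ^ 4 = ((c * y) ^ 2) ^ 2 := by group
  rw [h4, h2]
  have hmove3 : (c^2 * y^2) * ⁅c, y⁆⁻¹ = ⁅c, y⁆⁻¹ * (c^2 * y^2) :=
    Subgroup.mem_center_iff.mp (inv_mem hz1c) _
  calc (⁅c, y⁆⁻¹ * (c^2 * y^2)) ^ 2
      = ⁅c, y⁆⁻¹ * ((c^2 * y^2) * ⁅c, y⁆⁻¹) * (c^2 * y^2) := by rw [pow_two]; group
  _ = ⁅c, y⁆⁻¹ * (⁅c, y⁆⁻¹ * (c^2 * y^2)) * (c^2 * y^2) := by rw [hmove3]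
  _ = (⁅c, y⁆ ^ 2)⁻¹ * (c^2 * (y^2 * c^2) * y^2) := by rw [pow_two ⁅c, y⁆]; group
  _ = c^2 * (y^2 * c^2) * y^2 := by rw [hz1sq]; group
  _ = c^2 * (c^2 * y^2) * y^2 := by rw [h3]
  _ = c^4 * y^4 := by
      rw [show (4:ℕ) = 2 + 2 from rfl, pow_add, pow_add]
      group
  _ = y^4 := by rw [hexpc c hc]; group

end EltTwo
section MainLemma

lemma card_quot_le {G : Type*} [Group G] [Finite G] {W : Subgroup G} [W.Normal] (hW : W ≠ ⊥)
    {m : ℕ} (h : Nat.card G ≤ m + 1) : Nat.card (G ⧸ W) ≤ m := by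
  have h1 : Nat.card G = Nat.card (G ⧸ W) * Nat.card W :=
    Subgroup.card_eq_card_quotient_mul_card_subgroup W
  have h2 : 1 < Nat.card W := (Subgroup.one_lt_card_iff_ne_bot W).mpr hW
  have h3 : 0 < Nat.card (G ⧸ W) := Nat.card_pos
  have h4 : Nat.card (G ⧸ W) * 2 ≤ Nat.card (G ⧸ W) * Nat.card W :=
    Nat.mul_le_mul_left _ h2
  omega

lemma quot_step {G : Type*} [Group G] (q : ℕ) (W : Subgroup G) [W.Normal]
    (N : Subgroup G)
    (hres : ⁅spow (N.map (QuotientGroup.mk' W)) q, (⊤ : Subgroup (G ⧸ W))⁆ ≤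
      spow ⁅N.map (QuotientGroup.mk' W), (⊤ : Subgroup (G ⧸ W))⁆ q) :
    ⁅spow N q, (⊤ : Subgroup G)⁆ ≤ (spow ⁅N, ⊤⁆ q) ⊔ W := by
  set π := QuotientGroup.mk' W
  have hsurj : Function.Surjective π := QuotientGroup.mk'_surjective W
  have hL : ⁅spow (N.map π) q, (⊤ : Subgroup (G ⧸ W))⁆ = Subgroup.map π ⁅spow N q, ⊤⁆ := by
    rw [Subgroup.map_commutator (spow N q) ⊤ π, spow_map π N q,
      Subgroup.map_top_of_surjective π hsurj]
  have hR : spow ⁅N.map π, (⊤ : Subgroup (G ⧸ W))⁆ q = Subgroup.map π (spow ⁅N, ⊤⁆ q) := by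
    rw [spow_map π ⁅N, ⊤⁆ q, Subgroup.map_commutator N ⊤ π,
      Subgroup.map_top_of_surjective π hsurj]
  rw [hL, hR] at hres
  have h5 := Subgroup.map_le_map_iff.mp hres
  rwa [QuotientGroup.ker_mk'] at h5

lemma hyp_quot_odd {G : Type*} [Group G] (p : ℕ) (W : Subgroup G) [W.Normal]
    (N : Subgroup G) (hpo : iterC N (p-2) ≤ spow N p) :
    iterC (N.map (QuotientGroup.mk' W)) (p-2) ≤ spow (N.map (QuotientGroup.mk' W)) p := by
  set π := QuotientGroup.mk' W
  have hsurj : Function.Surjective π := QuotientGroup.mk'_surjective W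
  rw [← iterC_map π hsurj N (p-2), ← spow_map]
  exact Subgroup.map_mono hpo

lemma hyp_quot_two {G : Type*} [Group G] (W : Subgroup G) [W.Normal]
    (N : Subgroup G) (hpo : ⁅N, (⊤ : Subgroup G)⁆ ≤ spow N 4) :
    ⁅N.map (QuotientGroup.mk' W), (⊤ : Subgroup (G ⧸ W))⁆ ≤ spow (N.map (QuotientGroup.mk' W)) 4 := by
  set π := QuotientGroup.mk' W
  have hsurj : Function.Surjective π := QuotientGroup.mk'_surjective W
  rw [← Subgroup.map_top_of_surjective π hsurj, ← Subgroup.map_commutator, ← spow_map]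
  exact Subgroup.map_mono hpo

lemma subsingleton_case {G : Type*} [Group G] [Finite G] (h : Nat.card G ≤ 1)
    {A B : Subgroup G} : A ≤ B := by
  haveI : Subsingleton G := not_nontrivial_iff_subsingleton.mp (fun hnt => by
    have := Finite.one_lt_card_iff_nontrivial.mpr hnt
    omega)
  intro x _
  have hx1 : x = 1 := Subsingleton.elim x 1
  rw [hx1]
  exact one_mem B

theorem ml_odd (p : ℕ) (hp : p.Prime) (hp3 : 3 ≤ p) :
    ∀ (m : ℕ) (G : Type*) [Group G] [Finite G], Nat.card G ≤ m →
    IsPGroup p G → ∀ (N : Subgroup G), N.Normal →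
    iterC N (p-2) ≤ spow N p →
    ⁅spow N p, (⊤ : Subgroup G)⁆ ≤ spow ⁅N, ⊤⁆ p := by
  intro m
  induction m with
  | zero =>
    intro G _ _ hcard
    have := Nat.card_pos (α := G)
    omega
  | succ m ih =>
    intro G _ _ hcard hG N hN hpo
    haveI := hN
    set M := spow ⁅N, (⊤ : Subgroup G)⁆ p with hM
    haveI hMnormal : M.Normal := spow_normal _ p
    by_cases hMbot : M = ⊥
    case neg =>
      have hcard2 : Nat.card (G ⧸ M) ≤ m := card_quot_le hMbot hcard
      have hres := ih (G ⧸ M) hcard2 (hG.to_quotient M) (N.map (QuotientGroup.mk' M))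
        (hN.map _ (QuotientGroup.mk'_surjective M)) (hyp_quot_odd p M N hpo)
      have h6 := quot_step p M N hres
      rwa [← hM, sup_idem] at h6
    case pos =>
      have hexpc : ∀ u ∈ ⁅N, (⊤ : Subgroup G)⁆, u ^ p = 1 := fun u hu =>
        spow_bot_exp hMbot u hu
      by_cases htriv : Nat.card G ≤ 1
      · exact subsingleton_case htriv
      haveI hnontriv : Nontrivial G := by
        rw [← Finite.one_lt_card_iff_nontrivial]
        omega
      obtain ⟨z, hzc, hzne, hzp⟩ := exists_central_order p hp hG
      set Z := Subgroup.zpowers z with hZ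
      haveI hZn : Z.Normal := by
        constructor
        intro x hx g
        obtain ⟨t, rfl⟩ := Subgroup.mem_zpowers_iff.mp hx
        have hcomm : g * z ^ t = z ^ t * g := Subgroup.mem_center_iff.mp (zpow_mem hzc t) g
        have heq : g * z ^ t * g⁻¹ = z ^ t := by rw [hcomm]; group
        rw [heq]
        exact zpow_mem (Subgroup.mem_zpowers z) t
      have hZne : Z ≠ ⊥ := by
        rw [hZ, Ne, Subgroup.zpowers_eq_bot]
        exact hzne
      have hcard2 : Nat.card (G ⧸ Z) ≤ m := card_quot_le hZne hcard
      have hres := ih (G ⧸ Z) hcard2 (hG.to_quotient Z) (N.map (QuotientGroup.mk' Z))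
        (hN.map _ (QuotientGroup.mk'_surjective Z)) (hyp_quot_odd p Z N hpo)
      have h6 := quot_step p Z N hres
      rw [← hM, hMbot, bot_sup_eq] at h6
      have hKcent : ∀ x ∈ ⁅spow N p, (⊤ : Subgroup G)⁆, x ∈ Subgroup.center G := by
        intro x hx
        obtain ⟨t, rfl⟩ := Subgroup.mem_zpowers_iff.mp (h6 hx)
        exact zpow_mem hzc t
      rw [hMbot, Subgroup.commutator_le]
      intro g1 hg1 g2 _
      suffices hcen : spow N p ≤ Subgroup.center G by
        have h7 := Subgroup.mem_center_iff.mp (hcen hg1) g2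
        have h8 : ⁅g1, g2⁆ = 1 := commutatorElement_eq_one_iff_mul_comm.mpr h7.symm
        rw [h8]
        exact one_mem ⊥
      rw [spow, Subgroup.closure_le]
      rintro x ⟨y, hy, rfl⟩
      rw [SetLike.mem_coe, Subgroup.mem_center_iff]
      intro w
      have hcmem : ⁅w, y⁆ ∈ ⁅N, (⊤ : Subgroup G)⁆ := by
        have h9 := Subgroup.commutator_mem_commutator (Subgroup.mem_top w) hy
        rwa [Subgroup.commutator_comm] at h9
      have hkey := elt_step_odd p hp hp3 N hN hpo hexpc hKcent hcmem hy
      have h10 : w * y ^ p * w⁻¹ = (w * y * w⁻¹) ^ p := by rw [conj_pow]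
      have h11 : w * y * w⁻¹ = ⁅w, y⁆ * y := by group
      rw [h11, hkey] at h10
      calc w * y ^ p = (w * y ^ p * w⁻¹) * w := by group
      _ = y ^ p * w := by rw [h10]

theorem ml_two :
    ∀ (m : ℕ) (G : Type*) [Group G] [Finite G], Nat.card G ≤ m →
    IsPGroup 2 G → ∀ (N : Subgroup G), N.Normal →
    ⁅N, (⊤ : Subgroup G)⁆ ≤ spow N 4 →
    ⁅spow N 4, (⊤ : Subgroup G)⁆ ≤ spow ⁅N, ⊤⁆ 4 := by
  intro m
  induction m with
  | zero =>
    intro G _ _ hcard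
    have := Nat.card_pos (α := G)
    omega
  | succ m ih =>
    intro G _ _ hcard hG N hN hpo
    haveI := hN
    set M := spow ⁅N, (⊤ : Subgroup G)⁆ 4 with hM
    haveI hMnormal : M.Normal := spow_normal _ 4
    by_cases hMbot : M = ⊥
    case neg =>
      have hcard2 : Nat.card (G ⧸ M) ≤ m := card_quot_le hMbot hcard
      have hres := ih (G ⧸ M) hcard2 (hG.to_quotient M) (N.map (QuotientGroup.mk' M))
        (hN.map _ (QuotientGroup.mk'_surjective M)) (hyp_quot_two M N hpo)
      have h6 := quot_step 4 M N hres
      rwa [← hM, sup_idem] at h6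
    case pos =>
      have hexpc : ∀ u ∈ ⁅N, (⊤ : Subgroup G)⁆, u ^ 4 = 1 := fun u hu =>
        spow_bot_exp hMbot u hu
      by_cases htriv : Nat.card G ≤ 1
      · exact subsingleton_case htriv
      haveI hnontriv : Nontrivial G := by
        rw [← Finite.one_lt_card_iff_nontrivial]
        omega
      obtain ⟨z, hzc, hzne, hzp⟩ := exists_central_order 2 Nat.prime_two hG
      set Z := Subgroup.zpowers z with hZ
      haveI hZn : Z.Normal := by
        constructor
        intro x hx g
        obtain ⟨t, rfl⟩ := Subgroup.mem_zpowers_iff.mp hx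
        have hcomm : g * z ^ t = z ^ t * g := Subgroup.mem_center_iff.mp (zpow_mem hzc t) g
        have heq : g * z ^ t * g⁻¹ = z ^ t := by rw [hcomm]; group
        rw [heq]
        exact zpow_mem (Subgroup.mem_zpowers z) t
      have hZne : Z ≠ ⊥ := by
        rw [hZ, Ne, Subgroup.zpowers_eq_bot]
        exact hzne
      have hcard2 : Nat.card (G ⧸ Z) ≤ m := card_quot_le hZne hcard
      have hres := ih (G ⧸ Z) hcard2 (hG.to_quotient Z) (N.map (QuotientGroup.mk' Z))
        (hN.map _ (QuotientGroup.mk'_surjective Z)) (hyp_quot_two Z N hpo)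
      have h6 := quot_step 4 Z N hres
      rw [← hM, hMbot, bot_sup_eq] at h6
      have hKZ : ∀ x ∈ ⁅spow N 4, (⊤ : Subgroup G)⁆, x ∈ Subgroup.center G ∧ x ^ 2 = 1 := by
        intro x hx
        obtain ⟨t, rfl⟩ := Subgroup.mem_zpowers_iff.mp (h6 hx)
        refine ⟨zpow_mem hzc t, ?_⟩
        have hzz : (z ^ t) ^ (2:ℕ) = ((z ^ (2:ℕ) : G) ^ t : G) := by
          rw [← zpow_natCast (z ^ t) 2, ← zpow_mul, mul_comm, zpow_mul, zpow_natCast]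
        rw [hzz, hzp, one_zpow]
      rw [hMbot, Subgroup.commutator_le]
      intro g1 hg1 g2 _
      suffices hcen : spow N 4 ≤ Subgroup.center G by
        have h7 := Subgroup.mem_center_iff.mp (hcen hg1) g2
        have h8 : ⁅g1, g2⁆ = 1 := commutatorElement_eq_one_iff_mul_comm.mpr h7.symm
        rw [h8]
        exact one_mem ⊥
      rw [spow, Subgroup.closure_le]
      rintro x ⟨y, hy, rfl⟩
      rw [SetLike.mem_coe, Subgroup.mem_center_iff]
      intro w
      have hcmem : ⁅w, y⁆ ∈ ⁅N, (⊤ : Subgroup G)⁆ := by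
        have h9 := Subgroup.commutator_mem_commutator (Subgroup.mem_top w) hy
        rwa [Subgroup.commutator_comm] at h9
      have hkey := elt_step_two N hN hpo hexpc hKZ hcmem hy
      have h10 : w * y ^ 4 * w⁻¹ = (w * y * w⁻¹) ^ 4 := by rw [conj_pow]
      have h11 : w * y * w⁻¹ = ⁅w, y⁆ * y := by group
      rw [h11, hkey] at h10
      calc w * y ^ 4 = (w * y ^ 4 * w⁻¹) * w := by group
      _ = y ^ 4 * w := by rw [h10]

end MainLemma
/-- **Lemma.** If `G` is a finite potent `p`-group then, for every `k ≥ 1`,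
`γ_{k+1}(G) ≤ γ_k(G)^4` when `p = 2`, and `γ_{p-1+k}(G) ≤ γ_{k+1}(G)^p` when `p ≥ 3`.
(Here `γ_j(G) = (⊤ : Subgroup G).lowerCentralSeries (j-1)`.) -/
theorem potent_lower_central_series (p : ℕ) (hp : p.Prime) (G : Type*) [Group G] [Finite G]
    (hG : IsPGroup p G) (hpot : IsPotent p G) (k : ℕ) (hk : 1 ≤ k) :
    (p = 2 → (⊤ : Subgroup G).lowerCentralSeries k ≤ spow ((⊤ : Subgroup G).lowerCentralSeries (k - 1)) 4) ∧
    (3 ≤ p → (⊤ : Subgroup G).lowerCentralSeries (p - 2 + k) ≤ spow ((⊤ : Subgroup G).lowerCentralSeries k) p) := by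
  constructor
  · intro hp2
    subst hp2
    have hpot2 : (⊤ : Subgroup G).lowerCentralSeries 1 ≤ spow (⊤ : Subgroup G) 4 := by
      unfold IsPotent at hpot
      simpa using hpot
    induction k, hk using Nat.le_induction with
    | base =>
      simpa [Subgroup.lowerCentralSeries_zero] using hpot2
    | succ n hn ihh =>
      have heq : ⁅(⊤ : Subgroup G).lowerCentralSeries (n-1), (⊤ : Subgroup G)⁆ = (⊤ : Subgroup G).lowerCentralSeries n := by
        rw [← lcs_succ']
        congr 1
        omega
      have hml := ml_two (Nat.card G) G le_rfl hG ((⊤ : Subgroup G).lowerCentralSeries (n-1)) inferInstance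
        (by rw [heq]; exact ihh)
      have hstep : (⊤ : Subgroup G).lowerCentralSeries (n+1) ≤ ⁅spow ((⊤ : Subgroup G).lowerCentralSeries (n-1)) 4,
          (⊤ : Subgroup G)⁆ := by
        rw [lcs_succ']
        exact Subgroup.commutator_mono ihh le_rfl
      refine hstep.trans (hml.trans ?_)
      rw [heq]
      simp only [Nat.add_sub_cancel]
      exact le_rfl
  · intro hp3
    have hne2 : p ≠ 2 := by omega
    have hpot3 : (⊤ : Subgroup G).lowerCentralSeries (p-2) ≤ spow (⊤ : Subgroup G) p := by
      unfold IsPotent at hpot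
      rwa [if_neg hne2] at hpot
    induction k, hk using Nat.le_induction with
    | base =>
      have hml := ml_odd p hp hp3 (Nat.card G) G le_rfl hG ⊤ inferInstance (by
        have heq : iterC (⊤ : Subgroup G) (p-2) = (⊤ : Subgroup G).lowerCentralSeries (p-2) := by
          rw [show (⊤ : Subgroup G) = (⊤ : Subgroup G).lowerCentralSeries 0 from rfl, iterC_lcs 0 (p-2)]
          congr 1
          omega
        rw [heq]
        exact hpot3)
      have h1 : (⊤ : Subgroup G).lowerCentralSeries (p-2+1) ≤ ⁅spow (⊤ : Subgroup G) p, ⊤⁆ := by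
        rw [lcs_succ']
        exact Subgroup.commutator_mono hpot3 le_rfl
      refine h1.trans (hml.trans ?_)
      have heq1 : ⁅(⊤ : Subgroup G), (⊤ : Subgroup G)⁆ = (⊤ : Subgroup G).lowerCentralSeries 1 := rfl
      rw [heq1]
    | succ n hn ihh =>
      have hml := ml_odd p hp hp3 (Nat.card G) G le_rfl hG ((⊤ : Subgroup G).lowerCentralSeries n)
        inferInstance (by
          rw [iterC_lcs n (p-2), Nat.add_comm]
          exact ihh)
      have h1 : (⊤ : Subgroup G).lowerCentralSeries (p-2+(n+1)) ≤
          ⁅spow ((⊤ : Subgroup G).lowerCentralSeries n) p, (⊤ : Subgroup G)⁆ := by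
        rw [show p-2+(n+1) = (p-2+n)+1 by omega, lcs_succ']
        exact Subgroup.commutator_mono ihh le_rfl
      refine h1.trans (hml.trans ?_)
      rw [(lcs_succ' n).symm]
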